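/- Let V be a real vector space, and let a_h and b be symmetric bilinear forms on V. Let λ, λ_h be real numbers and u, u_h, v ∈ V such that: b(u,u) = 1 and a_h(u,u) = λ (the exact eigenpair, normalized, with the broken form a_h agreeing with the exact form on the exact eigenfunction); b(u_h,u_h) = 1, a_h(u_h,u_h) = λ_h, and a_h(u_h,v) = λ_h·b(u_h,v) (the discrete eigenpair tested against v). Then the identity λ − λ_h = a_h(u−u_h, u−u_h) − λ_h·b(u−u_h, u−u_h) − 2λ_h·b(u−v, u_h) + 2·a_h(u−v, u_h) holds. -/
import Mathlib

/-- Lemma 3.1 (abstract error identity for nonconforming eigenvalue approximation). -/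
theorem morley_error_identity {V : Type*} [AddCommGroup V] [Module ℝ V]
    (a b : V →ₗ[ℝ] V →ₗ[ℝ] ℝ)
    (ha_symm : ∀ x y, a x y = a y x) (hb_symm : ∀ x y, b x y = b y x)
    (lam lamh : ℝ) (u uh v : V)
    (hub : b u u = 1) (hua : a u u = lam)
    (huhb : b uh uh = 1) (huha : a uh uh = lamh)
    (heig : a uh v = lamh * b uh v) :
    lam - lamh =
      a (u - uh) (u - uh) - lamh * b (u - uh) (u - uh)
        - 2 * lamh * b (u - v) uh + 2 * a (u - v) uh := by
  simp only [map_sub, LinearMap.sub_apply, ha_symm v uh, ha_symm u uh, hb_symm v uh,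
    hb_symm u uh, hub, hua, huhb, huha, heig]
  ring
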